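/- arXiv:1705.10533 — 6 statements merged into one kernel-verified Lean document; each statement's English description precedes it below -/
import Mathlib

section
/- Every regular language recognized by a totally defined reversible DFA in which every state is productive is a group language: in its minimal automaton each letter acts as a permutation of the states. -/
/-- A partial deterministic finite automaton (partial DFA). -/
structure PDFA (Q A : Type) where
  step : Q → A → Option Q
  init : Q
  acc : Q → Prop

namespace PDFA

variable {Q A : Type}

/-- Extended (partial) transition function on words. -/
def run (M : PDFA Q A) : Q → List A → Option Q
  | q, [] => some q
  | q, a :: w => (M.step q a).bind fun q' => M.run q' w

/-- The language accepted from state `q`. -/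
def LangFrom (M : PDFA Q A) (q : Q) : Set (List A) :=
  {w | ∃ q', M.run q w = some q' ∧ M.acc q'}

/-- The language of the automaton. -/
def Lang (M : PDFA Q A) : Set (List A) := M.LangFrom M.init

/-- An automaton is reversible if distinct states are never merged by a letter. -/
def Reversible (M : PDFA Q A) : Prop :=
  ∀ p q a r, M.step p a = some r → M.step q a = some r → p = q

/-- `Θ` is a congruence: an equivalence relation saturating the final states and
compatible with the (partial) action, including definedness. -/
def IsCongruence (M : PDFA Q A) (Θ : Q → Q → Prop) : Prop :=
  Equivalence Θ ∧
  (∀ p q, Θ p q → (M.acc p ↔ M.acc q)) ∧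
  (∀ p q a, Θ p q → ((M.step p a).isSome ↔ (M.step q a).isSome) ∧
    ∀ p' q', M.step p a = some p' → M.step q a = some q' → Θ p' q')

/-- A reversible congruence: a congruence whose factor automaton is reversible,
equivalently `p·a Θ q·a` (both defined) implies `p Θ q`. -/
def IsRevCongruence (M : PDFA Q A) (Θ : Q → Q → Prop) : Prop :=
  M.IsCongruence Θ ∧
  ∀ p q a p' q', M.step p a = some p' → M.step q a = some q' → Θ p' q' → Θ p q

def Reachable (M : PDFA Q A) (q : Q) : Prop := ∃ w, M.run M.init w = some q

def Productive (M : PDFA Q A) (q : Q) : Prop := ∃ w, w ∈ M.LangFrom q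

/-- A trim automaton: all states reachable and productive. -/
def Trim (M : PDFA Q A) : Prop := ∀ q, M.Reachable q ∧ M.Productive q

/-- The set of access words of a state. -/
def AccessWords (M : PDFA Q A) (q : Q) : Set (List A) :=
  {w | M.run M.init w = some q}

/-- An `∞`-state: reachable by infinitely many words. -/
def InfState (M : PDFA Q A) (q : Q) : Prop := (M.AccessWords q).Infinite

/-- A `1`-state: reachable by exactly one word. -/
def OneState (M : PDFA Q A) (q : Q) : Prop := ∃! w, w ∈ M.AccessWords q

/-- A `⊕`-state: neither a `1`-state nor an `∞`-state. -/
def PlusState (M : PDFA Q A) (q : Q) : Prop := ¬ M.OneState q ∧ ¬ M.InfState q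

/-- An irreversible state: reachable from two distinct states by a common word. -/
def IrrevState (M : PDFA Q A) (r : Q) : Prop :=
  ∃ p₁ p₂ u, p₁ ≠ p₂ ∧ M.run p₁ u = some r ∧ M.run p₂ u = some r

/-- Zig-zag states: the least set containing the `∞`-states, closed under defined
forward transitions, and containing every `⊕`-state with a transition into the set. -/
inductive ZigZag (M : PDFA Q A) : Q → Prop
  | inf {q} : M.InfState q → ZigZag M q
  | fwd {q a q'} : ZigZag M q → M.step q a = some q' → ZigZag M q'
  | back {q a q'} : M.PlusState q → M.step q a = some q' → ZigZag M q' → ZigZag M q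

/-- A reduced reversible automaton: trim, reversible, with no nontrivial reversible
congruence. -/
def ReducedReversible (M : PDFA Q A) : Prop :=
  M.Trim ∧ M.Reversible ∧ ∀ Θ, M.IsRevCongruence Θ → ∀ p q, Θ p q → p = q

/-- `n`-fold repetition of a word. -/
def wpow (w : List A) (n : ℕ) : List A := (List.replicate n w).flatten

end PDFA

theorem run_append' {Q A : Type} (M : PDFA Q A) (u v : List A) :
    ∀ q, M.run q (u ++ v) = (M.run q u).bind fun q' => M.run q' v := by
  induction u with
  | nil => intro q; simp [PDFA.run]
  | cons a u ih =>
    intro q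
    simp only [List.cons_append, PDFA.run]
    cases M.step q a with
    | none => simp
    | some r => simp [ih r]

theorem run_replicate' {Q A : Type} (M : PDFA Q A) (htot : ∀ q a, (M.step q a).isSome) (a : A) (n : ℕ) :
    ∀ q, M.run q (List.replicate n a) = some ((fun q => (M.step q a).get (htot q a))^[n] q) := by
  induction n with
  | zero => intro q; simp [PDFA.run]
  | succ n ih =>
    intro q
    rw [List.replicate_succ]
    simp only [PDFA.run]
    rw [← Option.some_get (htot q a), Option.bind_some, ih, Function.iterate_succ_apply]

theorem iterate_id' {Q : Type} [Finite Q] (f : Q → Q) (hf : Function.Bijective f) :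
    ∃ n, 0 < n ∧ f^[n] = id := by
  let e : Equiv.Perm Q := Equiv.ofBijective f hf
  refine ⟨orderOf e, orderOf_pos e, ?_⟩
  funext q
  have h2 : ∀ m q, (e ^ m) q = f^[m] q := by
    intro m
    induction m with
    | zero => intro q; rfl
    | succ m ih =>
      intro q
      rw [pow_succ, Function.iterate_succ_apply, Equiv.Perm.mul_apply, ih]
      rfl
  have h : (e ^ orderOf e) q = q := by rw [pow_orderOf_eq_one]; rfl
  rw [h2] at h
  simpa using h

theorem langFrom_char {Q' A : Type} (M' : PDFA Q' A) (p : Q') (u : List A)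
    (hu : M'.run M'.init u = some p) (w : List A) :
    w ∈ M'.LangFrom p ↔ (u ++ w) ∈ M'.Lang := by
  simp [PDFA.Lang, PDFA.LangFrom, run_append', hu]

/-- Every regular language recognized by a totally defined reversible
DFA with all states productive is a group language: in its minimal (total) automaton
each letter acts as a permutation of the states. Here `M'` is a minimal total DFA
(all states reachable, pairwise inequivalent) recognizing the same language. -/
theorem stmt2 {Q Q' A : Type} [Finite Q] [Finite Q'] (M : PDFA Q A)
    (htot : ∀ (q : Q) (a : A), (M.step q a).isSome)
    (hrev : M.Reversible)
    (hprod : ∀ q : Q, M.Productive q)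
    (M' : PDFA Q' A)
    (htot' : ∀ (q : Q') (a : A), (M'.step q a).isSome)
    (hreach' : ∀ q : Q', M'.Reachable q)
    (hmin' : ∀ p q : Q', M'.LangFrom p = M'.LangFrom q → p = q)
    (hlang : M'.Lang = M.Lang) :
    ∀ a : A, Function.Bijective (fun q : Q' => (M'.step q a).get (htot' q a)) := by
  intro a
  set f : Q → Q := fun q => (M.step q a).get (htot q a) with hfdef
  have hstepf : ∀ q : Q, M.step q a = some (f q) := fun q => (Option.some_get (htot q a)).symm
  have hfinj : Function.Injective f := fun p q h => by
    refine hrev p q a (f p) (hstepf p) ?_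
    rw [hstepf q, h]
  obtain ⟨n, hn, hid⟩ := iterate_id' f (Finite.injective_iff_bijective.mp hfinj)
  have key : ∀ u w : List A, (u ++ (List.replicate n a ++ w)) ∈ M.Lang ↔ (u ++ w) ∈ M.Lang := by
    intro u w
    simp only [PDFA.Lang, PDFA.LangFrom, Set.mem_setOf_eq, run_append', run_replicate' M htot a]
    cases h : M.run M.init u with
    | none => simp
    | some t => simp [← hfdef, hid]
  set g : Q' → Q' := fun q => (M'.step q a).get (htot' q a) with hgdef
  have hstepg : ∀ q : Q', M'.step q a = some (g q) := fun q => (Option.some_get (htot' q a)).symm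
  have hrung : ∀ (m : ℕ) (q : Q'), M'.run q (List.replicate m a) = some (g^[m] q) :=
    fun m q => run_replicate' M' htot' a m q
  have hginj : Function.Injective g := by
    intro p q hpq
    obtain ⟨u, hu⟩ := hreach' p
    obtain ⟨v, hv⟩ := hreach' q
    obtain ⟨m, rfl⟩ : ∃ m, n = m + 1 := ⟨n - 1, (Nat.succ_pred_eq_of_pos hn).symm⟩
    have hsame : g^[m+1] p = g^[m+1] q := by
      rw [Function.iterate_succ_apply, Function.iterate_succ_apply, hpq]
    have hLp : ∀ w, w ∈ M'.LangFrom p ↔ w ∈ M'.LangFrom (g^[m+1] p) := by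
      intro w
      rw [langFrom_char M' p u hu w, hlang, ← key u w, ← hlang,
        ← List.append_assoc,
        ← langFrom_char M' (g^[m+1] p) (u ++ List.replicate (m+1) a) ?_ w]
      rw [run_append', hu, Option.bind_some, hrung]
    have hLq : ∀ w, w ∈ M'.LangFrom q ↔ w ∈ M'.LangFrom (g^[m+1] q) := by
      intro w
      rw [langFrom_char M' q v hv w, hlang, ← key v w, ← hlang,
        ← List.append_assoc,
        ← langFrom_char M' (g^[m+1] q) (v ++ List.replicate (m+1) a) ?_ w]
      rw [run_append', hv, Option.bind_some, hrung]
    apply hmin'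
    ext w
    rw [hLp, hLq, hsame]
  exact Finite.injective_iff_bijective.mp hginj
end

section
/- Let M be the minimal partial DFA of a reversible language L with zig-zag states Z, all of which are reversible, and let N be a trim reversible partial DFA recognizing L with canonical homomorphism q ↦ q* into M. Then the relation Θ defined by p Θ q iff (p = q) or (p* = q* ∈ Z) is a reversible congruence on N. -/
/-- If all zig-zag states of the minimal automaton `M` are reversible
and `N` is a trim reversible automaton recognizing the same language, with canonical
homomorphism `f : q ↦ q*`, then `p Θ q ↔ p = q ∨ (p* = q* ∈ Z)` is a reversible
congruence on `N`. -/
theorem stmt6 {Q Qm A : Type} (M : PDFA Qm A) (N : PDFA Q A)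
    (hMtrim : M.Trim)
    (hMmin : ∀ p q : Qm, M.LangFrom p = M.LangFrom q → p = q)
    (hZrev : ∀ r : Qm, M.ZigZag r → ¬ M.IrrevState r)
    (hNtrim : N.Trim) (hNrev : N.Reversible)
    (hlang : N.Lang = M.Lang)
    (f : Q → Qm)
    (hf : ∀ q : Q, M.LangFrom (f q) = N.LangFrom q)
    (hfhom : ∀ (q : Q) (a : A) (q' : Q),
      N.step q a = some q' → M.step (f q) a = some (f q'))
    (hfinit : f N.init = M.init)
    (hfacc : ∀ q : Q, N.acc q ↔ M.acc (f q)) :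
    N.IsRevCongruence (fun p q => p = q ∨ (f p = f q ∧ M.ZigZag (f p))) := by

  -- auxiliary facts
  have hfrun : ∀ (w : List A) (q q' : Q), N.run q w = some q' → M.run (f q) w = some (f q') := by
    intro w
    induction w with
    | nil => intro q q' h; simp [PDFA.run] at h ⊢; exact congrArg f h
    | cons a w ih =>
      intro q q' h
      simp only [PDFA.run, Option.bind_eq_some_iff] at h ⊢
      obtain ⟨q₁, hq₁, hrest⟩ := h
      exact ⟨f q₁, hfhom q a q₁ hq₁, ih q₁ q' hrest⟩
  have hstepSome : ∀ (q : Q) (a : A), (M.step (f q) a).isSome → (N.step q a).isSome := by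
    intro q a h
    obtain ⟨r, hr⟩ := Option.isSome_iff_exists.mp h
    obtain ⟨w, q'', hrun, hacc⟩ := (hMtrim r).2
    have hmem : (a :: w) ∈ M.LangFrom (f q) := by
      refine ⟨q'', ?_, hacc⟩
      simp only [PDFA.run, hr, Option.bind_some]
      exact hrun
    rw [hf q] at hmem
    obtain ⟨q3, hq3, _⟩ := hmem
    simp only [PDFA.run, Option.bind_eq_some_iff] at hq3
    obtain ⟨q1, hq1, _⟩ := hq3
    exact Option.isSome_iff_exists.mpr ⟨q1, hq1⟩
  constructor
  · refine ⟨⟨fun p => Or.inl rfl, ?_, ?_⟩, ?_, ?_⟩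
    · rintro p q (rfl | ⟨he, hz⟩)
      · exact Or.inl rfl
      · exact Or.inr ⟨he.symm, he ▸ hz⟩
    · rintro p q r (rfl | ⟨he, hz⟩) h2
      · exact h2
      · rcases h2 with rfl | ⟨he2, _⟩
        · exact Or.inr ⟨he, hz⟩
        · exact Or.inr ⟨he.trans he2, hz⟩
    · rintro p q (rfl | ⟨he, hz⟩)
      · rfl
      · rw [hfacc p, hfacc q, he]
    · rintro p q a (rfl | ⟨he, hz⟩)
      · exact ⟨Iff.rfl, fun p' q' h1 h2 => Or.inl (by rw [h1] at h2; exact Option.some.inj h2)⟩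
      · constructor
        · constructor
          · intro hs
            obtain ⟨p', hp'⟩ := Option.isSome_iff_exists.mp hs
            exact hstepSome q a (by rw [← he]; exact Option.isSome_iff_exists.mpr ⟨f p', hfhom p a p' hp'⟩)
          · intro hs
            obtain ⟨q', hq'⟩ := Option.isSome_iff_exists.mp hs
            exact hstepSome p a (by rw [he]; exact Option.isSome_iff_exists.mpr ⟨f q', hfhom q a q' hq'⟩)
        · intro p' q' hp' hq'
          have h1 := hfhom p a p' hp'
          have h2 := hfhom q a q' hq'
          rw [he] at h1
          rw [h1] at h2
          exact Or.inr ⟨Option.some.inj h2, PDFA.ZigZag.fwd hz (he ▸ h1)⟩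
  · rintro p q a p' q' hp' hq' (rfl | ⟨he, hz⟩)
    · exact Or.inl (hNrev p q a p' hp' hq')
    · by_cases hpq : p = q
      · exact Or.inl hpq
      · -- f p = f q, else f p' irreversible zig-zag state
        have h1 := hfhom p a p' hp'
        have h2 := hfhom q a q' hq'
        rw [he] at h1
        have hfpq : f p = f q := by
          by_contra hne
          refine hZrev (f p') hz ⟨f p, f q, [a], hne, ?_, ?_⟩ <;>
            simp [PDFA.run, h1, h2, he]
        -- f p is not a 1-state
        obtain ⟨wp, hwp⟩ := (hNtrim p).1
        obtain ⟨wq, hwq⟩ := (hNtrim q).1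
        have hwne : wp ≠ wq := by
          intro hEq; apply hpq
          rw [hEq] at hwp; rw [hwp] at hwq; exact Option.some.inj hwq
        have hap : M.run M.init wp = some (f p) := hfinit ▸ hfrun wp N.init p hwp
        have haq : M.run M.init wq = some (f p) := hfpq ▸ (hfinit ▸ hfrun wq N.init q hwq)
        have hnotOne : ¬ M.OneState (f p) := by
          rintro ⟨w, hw, huniq⟩
          exact hwne ((huniq wp hap).trans (huniq wq haq).symm)
        have hzfp : M.ZigZag (f p) := by
          by_cases hinf : M.InfState (f p)
          · exact PDFA.ZigZag.inf hinf
          · exact PDFA.ZigZag.back ⟨hnotOne, hinf⟩ h1 (he ▸ hz)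
        exact Or.inr ⟨hfpq, hzfp⟩
end

section
/- Let M be a minimal trim partial DFA of a reversible language L such that every zig-zag state of M is reversible. Then there is a finite bound n, computable from M, such that every reduced reversible automaton recognizing L has at most n states; consequently there are only finitely many reduced reversible automata recognizing L up to isomorphism. -/
namespace PDFA

lemma run_append {Q A : Type} (M : PDFA Q A) (w u : List A) (q : Q) :
    M.run q (w ++ u) = (M.run q w).bind (fun r => M.run r u) := by
  induction w generalizing q with
  | nil => simp [PDFA.run]
  | cons a w ih =>
    simp only [List.cons_append, PDFA.run]
    cases M.step q a with
    | none => rfl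
    | some q' => simp [ih]

lemma langFrom_eq {Q A : Type} (M : PDFA Q A) {w : List A} {q : Q}
    (h : M.run M.init w = some q) :
    M.LangFrom q = {u | (w ++ u) ∈ M.Lang} := by
  ext u
  simp [PDFA.LangFrom, PDFA.Lang, PDFA.run_append, h]

lemma acc_iff_nil_mem {Q A : Type} (M : PDFA Q A) (q : Q) :
    M.acc q ↔ [] ∈ M.LangFrom q := by
  simp [PDFA.LangFrom, PDFA.run]

end PDFA

/-- If `M` is the minimal trim partial DFA of a reversible language and
every zig-zag state of `M` is reversible, then there is a finite bound `n` such that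
every reduced reversible automaton recognizing the language has at most `n` states
(hence only finitely many up to isomorphism). -/
theorem stmt7 {Qm A : Type} [Fintype Qm] (M : PDFA Qm A)
    (hMtrim : M.Trim)
    (hMmin : ∀ p q : Qm, M.LangFrom p = M.LangFrom q → p = q)
    (hLrev : ∃ (Q₀ : Type) (_ : Fintype Q₀) (N₀ : PDFA Q₀ A),
      N₀.Reversible ∧ N₀.Lang = M.Lang)
    (hZrev : ∀ r : Qm, M.ZigZag r → ¬ M.IrrevState r) :
    ∃ n : ℕ, ∀ (Q : Type) (_ : Fintype Q) (N : PDFA Q A),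
      N.ReducedReversible → N.Lang = M.Lang → Fintype.card Q ≤ n := by
  classical
  refine ⟨Fintype.card Qm + ∑ p : Qm, (M.AccessWords p).ncard, ?_⟩
  intro Q _ N hNred hNlang
  obtain ⟨hNtrim, hNrev, hNirr⟩ := hNred
  -- every access word of a state of N is defined in M
  have hrunM : ∀ (v : List A) (q : Q), N.run N.init v = some q →
      ∃ p, M.run M.init v = some p := by
    intro v q hv
    obtain ⟨u, q', hq', hq'acc⟩ := (hNtrim q).2
    have hmem : (v ++ u) ∈ N.Lang := by
      refine ⟨q', ?_, hq'acc⟩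
      rw [PDFA.run_append, hv]
      exact hq'
    rw [hNlang] at hmem
    obtain ⟨p', hp', -⟩ := hmem
    rw [PDFA.run_append] at hp'
    cases h : M.run M.init v with
    | none => rw [h] at hp'; simp at hp'
    | some p => exact ⟨p, rfl⟩
  have huniq : ∀ (v v' : List A) (q : Q) (p p' : Qm),
      N.run N.init v = some q → N.run N.init v' = some q →
      M.run M.init v = some p → M.run M.init v' = some p' → p = p' := by
    intro v v' q p p' hv hv' hp hp'
    apply hMmin
    rw [M.langFrom_eq hp, M.langFrom_eq hp', ← hNlang,
      ← N.langFrom_eq hv, ← N.langFrom_eq hv']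
  have hphi : ∀ q : Q, ∃ p : Qm, ∃ v, N.run N.init v = some q ∧
      M.run M.init v = some p := by
    intro q
    obtain ⟨v, hv⟩ := (hNtrim q).1
    obtain ⟨p, hp⟩ := hrunM v q hv
    exact ⟨p, v, hv, hp⟩
  choose φ wit hwit1 hwit2 using hphi
  have hword : ∀ (v : List A) (q : Q), N.run N.init v = some q →
      M.run M.init v = some (φ q) := by
    intro v q hv
    obtain ⟨p, hp⟩ := hrunM v q hv
    rw [hp, huniq v (wit q) q p (φ q) hv (hwit1 q) hp (hwit2 q)]
  have hlangφ : ∀ q : Q, N.LangFrom q = M.LangFrom (φ q) := by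
    intro q
    rw [M.langFrom_eq (hwit2 q), N.langFrom_eq (hwit1 q), hNlang]
  have hstep : ∀ (q q' : Q) (a : A), N.step q a = some q' →
      M.step (φ q) a = some (φ q') := by
    intro q q' a h
    have h1 : N.run N.init (wit q ++ [a]) = some q' := by
      rw [PDFA.run_append, hwit1 q]
      simp [PDFA.run, h]
    have h2 := hword _ _ h1
    rw [PDFA.run_append, hwit2 q] at h2
    simp only [Option.bind_some, PDFA.run] at h2
    cases hs : M.step (φ q) a with
    | none => rw [hs] at h2; simp at h2
    | some r => rw [hs] at h2; simpa [PDFA.run] using h2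
  have haccφ : ∀ q : Q, (N.acc q ↔ M.acc (φ q)) := by
    intro q
    rw [N.acc_iff_nil_mem, M.acc_iff_nil_mem, hlangφ]
  have hdefb : ∀ (q : Q) (a : A), (M.step (φ q) a).isSome → (N.step q a).isSome := by
    intro q a h
    obtain ⟨p₁, hp₁⟩ := Option.isSome_iff_exists.mp h
    obtain ⟨u, p₂, hp₂, hacc₂⟩ := (hMtrim p₁).2
    have hmem : (a :: u) ∈ M.LangFrom (φ q) := by
      refine ⟨p₂, ?_, hacc₂⟩
      simp [PDFA.run, hp₁, hp₂]
    rw [← hlangφ q] at hmem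
    obtain ⟨q₂, hq₂, -⟩ := hmem
    simp only [PDFA.run] at hq₂
    cases hs : N.step q a with
    | none => rw [hs] at hq₂; simp at hq₂
    | some r => simp
  have hone : ∀ q q' : Q, φ q = φ q' → M.OneState (φ q) → q = q' := by
    intro q q' he hOne
    obtain ⟨w₀, hw₀, huw⟩ := hOne
    have h1 : wit q = w₀ := huw _ (hwit2 q)
    have h2 : wit q' = w₀ := by
      refine huw _ ?_
      show M.run M.init (wit q') = some (φ q)
      rw [he]; exact hwit2 q'
    have e1 : N.run N.init w₀ = some q := by rw [← h1]; exact hwit1 q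
    have e2 : N.run N.init w₀ = some q' := by rw [← h2]; exact hwit1 q'
    rw [e1] at e2
    exact Option.some.inj e2
  -- the reversible congruence
  set Θ : Q → Q → Prop := fun r r' => r = r' ∨ (φ r = φ r' ∧ M.ZigZag (φ r)) with hΘdef
  have hcong : N.IsRevCongruence Θ := by
    refine ⟨⟨⟨fun r => Or.inl rfl, ?_, ?_⟩, ?_, ?_⟩, ?_⟩
    · rintro r r' (rfl | ⟨he, hz⟩)
      · exact Or.inl rfl
      · exact Or.inr ⟨he.symm, he ▸ hz⟩
    · rintro r r' r'' (rfl | ⟨he, hz⟩) h2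
      · exact h2
      · rcases h2 with rfl | ⟨he', hz'⟩
        · exact Or.inr ⟨he, hz⟩
        · exact Or.inr ⟨he.trans he', hz⟩
    · rintro r r' (rfl | ⟨he, hz⟩)
      · rfl
      · rw [haccφ r, haccφ r', he]
    · rintro r r' a (rfl | ⟨he, hz⟩)
      · refine ⟨Iff.rfl, fun p' q' h1 h2 => ?_⟩
        rw [h1] at h2
        exact Or.inl (Option.some.inj h2)
      · constructor
        · constructor
          · intro h
            obtain ⟨r₁, hr₁⟩ := Option.isSome_iff_exists.mp h
            apply hdefb
            rw [← he]
            rw [hstep r r₁ a hr₁]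
            rfl
          · intro h
            obtain ⟨r₁, hr₁⟩ := Option.isSome_iff_exists.mp h
            apply hdefb
            rw [he]
            rw [hstep r' r₁ a hr₁]
            rfl
        · intro p' q' h1 h2
          have hm1 := hstep r p' a h1
          have hm2 := hstep r' q' a h2
          rw [← he, hm1] at hm2
          refine Or.inr ⟨Option.some.inj hm2, ?_⟩
          exact PDFA.ZigZag.fwd hz hm1
    · rintro r r' a p' q' h1 h2 (rfl | ⟨he', hz'⟩)
      · exact Or.inl (hNrev r r' a p' h1 h2)
      · have hm1 := hstep r p' a h1
        have hm2 := hstep r' q' a h2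
        have hpq : φ r = φ r' := by
          by_contra hne
          refine hZrev (φ p') hz' ⟨φ r, φ r', [a], hne, ?_, ?_⟩
          · simp [PDFA.run, hm1]
          · rw [he'] at hz' ⊢
            simp [PDFA.run, hm2, he']
        by_cases hOne : M.OneState (φ r)
        · exact Or.inl (hone r r' hpq hOne)
        · by_cases hInf : M.InfState (φ r)
          · exact Or.inr ⟨hpq, PDFA.ZigZag.inf hInf⟩
          · exact Or.inr ⟨hpq, PDFA.ZigZag.back ⟨hOne, hInf⟩ hm1 hz'⟩
  have hinjZ : ∀ q q' : Q, φ q = φ q' → M.ZigZag (φ q) → q = q' := by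
    intro q q' he hz
    exact hNirr Θ hcong q q' (Or.inr ⟨he, hz⟩)
  -- counting
  have hsplit := Finset.card_filter_add_card_filter_not
    (s := (Finset.univ : Finset Q)) (p := fun q => M.ZigZag (φ q))
  have hb1 : (Finset.univ.filter (fun q => M.ZigZag (φ q))).card ≤ Fintype.card Qm := by
    rw [← Finset.card_univ (α := Qm)]
    refine Finset.card_le_card_of_injOn φ (fun q _ => Finset.mem_univ _) ?_
    intro q hq q' hq' he
    exact hinjZ q q' he (Finset.mem_filter.mp hq).2
  have hb2 : (Finset.univ.filter (fun q => ¬ M.ZigZag (φ q))).card ≤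
      ∑ p : Qm, (M.AccessWords p).ncard := by
    rw [Finset.card_eq_sum_card_fiberwise
      (f := φ) (t := Finset.univ) (fun q _ => Finset.mem_univ _)]
    refine Finset.sum_le_sum ?_
    intro p _
    rcases ((Finset.univ.filter (fun q => ¬ M.ZigZag (φ q))).filter
        (fun q => φ q = p)).eq_empty_or_nonempty with hemp | ⟨q0, hq0⟩
    · simp [hemp]
    · have hq0' := Finset.mem_filter.mp hq0
      have hz0 : ¬ M.ZigZag p := by
        rw [← hq0'.2]
        exact (Finset.mem_filter.mp hq0'.1).2
      have hnotinf : ¬ M.InfState p := fun h => hz0 (PDFA.ZigZag.inf h)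
      have hfin : (M.AccessWords p).Finite := Set.not_infinite.mp hnotinf
      rw [Set.ncard_eq_toFinset_card _ hfin]
      refine Finset.card_le_card_of_injOn wit ?_ ?_
      · intro q hq
        rw [Finset.mem_coe, Set.Finite.mem_toFinset]
        show M.run M.init (wit q) = some p
        rw [← (Finset.mem_filter.mp hq).2]
        exact hwit2 q
      · intro q hq q' hq' he
        have := hwit1 q
        rw [he, hwit1 q'] at this
        exact Option.some.inj this.symm
  have : Fintype.card Q = (Finset.univ.filter (fun q => M.ZigZag (φ q))).card +
      (Finset.univ.filter (fun q => ¬ M.ZigZag (φ q))).card := by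
    rw [hsplit, Finset.card_univ]
  omega
end

section
/- Let N' be a reversible partial DFA, k a prime, and suppose there exist states q₀,…,q_{k−1}, words w ∈ Σ⁺, states p′₀,…,p′_t and p″₀,…,p″_t, letters a₁,…,a_t, and directions e₁,…,e_t ∈ {+,−}, with p′₀ = q₀, p″₀ = q_i for some 0 < i < k, q_j·w = q_{j+1 mod k} for all j, for e_j = + : p′_{j−1}·a_j = p′_j and p″_{j−1}·a_j = p″_j, for e_j = − : p′_j·a_j = p′_{j−1} and p″_j·a_j = p″_{j−1}, and L(N′,p′_t) ≠ L(N′,p″_t). Then for every reversible congruence Θ on N′, the states q₀,…,q_{k−1} lie in pairwise distinct Θ-classes; in particular N′/Θ has at least k states. -/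
namespace PDFA

variable {Q A : Type}

lemma run_congr {M : PDFA Q A} {Θ : Q → Q → Prop} (hc : M.IsCongruence Θ) :
    ∀ (w : List A) {p q p' : Q}, Θ p q → M.run p w = some p' →
      ∃ q', M.run q w = some q' ∧ Θ p' q' := by
  intro w
  induction w with
  | nil =>
    intro p q p' h hr
    simp [run] at hr
    subst hr
    exact ⟨q, rfl, h⟩
  | cons b w ih =>
    intro p q p' h hr
    simp only [run, Option.bind_eq_some_iff] at hr
    obtain ⟨p₁, hp₁, hrest⟩ := hr
    have hdef := (hc.2.2 p q b h).1
    have hq1 : (M.step q b).isSome := by rw [← hdef, hp₁]; rfl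
    obtain ⟨q₁, hq₁⟩ := Option.isSome_iff_exists.mp hq1
    have hΘ1 := (hc.2.2 p q b h).2 p₁ q₁ hp₁ hq₁
    obtain ⟨q', hq', hΘ'⟩ := ih hΘ1 hrest
    exact ⟨q', by simp [run, hq₁, hq'], hΘ'⟩

lemma langFrom_congr {M : PDFA Q A} {Θ : Q → Q → Prop} (hc : M.IsCongruence Θ)
    {p q : Q} (h : Θ p q) : M.LangFrom p = M.LangFrom q := by
  ext u
  constructor
  · rintro ⟨p', hr, hacc⟩
    obtain ⟨q', hq', hΘ'⟩ := run_congr hc u h hr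
    exact ⟨q', hq', (hc.2.1 _ _ hΘ').mp hacc⟩
  · rintro ⟨q', hr, hacc⟩
    obtain ⟨p', hp', hΘ'⟩ := run_congr hc u (hc.1.symm h) hr
    exact ⟨p', hp', (hc.2.1 _ _ hΘ').mp hacc⟩

end PDFA
/-- The zig-zag pattern lemma. If a reversible automaton `N` contains a
`w`-cycle `q₀,…,q_{k−1}` of prime length `k` together with two zig-zag chains starting
at `q₀` and at `q_i` (`i ≠ 0`) and ending at inequivalent states, then any reversible
congruence keeps the `q_j` in pairwise distinct classes. -/
theorem stmt8 {Q A : Type} (N : PDFA Q A) (hrev : N.Reversible)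
    (k : ℕ) (hk : k.Prime) (t : ℕ)
    (q : ZMod k → Q) (w : List A) (hw : w ≠ [])
    (hcyc : ∀ j : ZMod k, N.run (q j) w = some (q (j + 1)))
    (i : ZMod k) (hi : i ≠ 0)
    (p' p'' : Fin (t + 1) → Q) (a : Fin t → A) (e : Fin t → Bool)
    (hp'0 : p' 0 = q 0) (hp''0 : p'' 0 = q i)
    (hfwd : ∀ j : Fin t, e j = true →
      N.step (p' j.castSucc) (a j) = some (p' j.succ) ∧
      N.step (p'' j.castSucc) (a j) = some (p'' j.succ))
    (hbwd : ∀ j : Fin t, e j = false →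
      N.step (p' j.succ) (a j) = some (p' j.castSucc) ∧
      N.step (p'' j.succ) (a j) = some (p'' j.castSucc))
    (hne : N.LangFrom (p' (Fin.last t)) ≠ N.LangFrom (p'' (Fin.last t)))
    (Θ : Q → Q → Prop) (hΘ : N.IsRevCongruence Θ) :
    ∀ j₁ j₂ : ZMod k, Θ (q j₁) (q j₂) → j₁ = j₂ := by
  intro j₁ j₂ hΘq
  by_contra hne'
  obtain ⟨hcong, hrevc⟩ := hΘ
  haveI : Fact k.Prime := ⟨hk⟩
  haveI : NeZero k := ⟨hk.ne_zero⟩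
  -- one step along the cycle
  have hstep : ∀ x y : ZMod k, Θ (q x) (q y) → Θ (q (x + 1)) (q (y + 1)) := by
    intro x y h
    obtain ⟨q', hq', hΘ'⟩ := PDFA.run_congr hcong w h (hcyc x)
    rw [hcyc y] at hq'
    injection hq' with hq'
    rwa [hq']
  -- shift by any natural number
  have hshift : ∀ (d : ℕ), Θ (q (j₁ + d)) (q (j₂ + d)) := by
    intro d
    induction d with
    | zero => simpa using hΘq
    | succ n ih =>
      have := hstep _ _ ih
      push_cast
      rw [← add_assoc, ← add_assoc]
      exact_mod_cast this
  set m : ZMod k := j₂ - j₁ with hm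
  have hm0 : m ≠ 0 := sub_ne_zero.mpr (fun h => hne' h.symm)
  -- shift by m from any point
  have hxm : ∀ x : ZMod k, Θ (q x) (q (x + m)) := by
    intro x
    have hd : ((x - j₁).val : ZMod k) = x - j₁ := by simp [ZMod.natCast_val, ZMod.cast_id]
    have := hshift (x - j₁).val
    rw [hd] at this
    have e1 : j₁ + (x - j₁) = x := by ring
    have e2 : j₂ + (x - j₁) = x + m := by rw [hm]; ring
    rwa [e1, e2] at this
  have hpow : ∀ (n : ℕ) (x : ZMod k), Θ (q x) (q (x + n * m)) := by
    intro n
    induction n with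
    | zero => intro x; simpa using hcong.1.refl (q x)
    | succ n ih =>
      intro x
      have h1 := ih x
      have h2 := hxm (x + n * m)
      have := hcong.1.trans h1 h2
      have e : x + (n : ZMod k) * m + m = x + ((n : ℕ) + 1 : ℕ) * m := by
        push_cast; ring
      rwa [e] at this
  -- conclude Θ (q 0) (q i)
  have h0i : Θ (q 0) (q i) := by
    have := hpow (i * m⁻¹).val 0
    have hd : (((i * m⁻¹).val : ℕ) : ZMod k) = i * m⁻¹ := by simp [ZMod.natCast_val, ZMod.cast_id]
    rw [hd] at this
    have e : (0 : ZMod k) + i * m⁻¹ * m = i := by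
      rw [zero_add, mul_assoc, inv_mul_cancel₀ hm0, mul_one]
    rwa [e] at this
  -- propagate along the zig-zag chains
  have hchain : ∀ j : Fin (t + 1), Θ (p' j) (p'' j) := by
    intro j
    induction j using Fin.induction with
    | zero => rw [hp'0, hp''0]; exact h0i
    | succ j ih =>
      cases he : e j with
      | true =>
        obtain ⟨h1, h2⟩ := hfwd j he
        exact (hcong.2.2 _ _ (a j) ih).2 _ _ h1 h2
      | false =>
        obtain ⟨h1, h2⟩ := hbwd j he
        exact hrevc _ _ (a j) _ _ h1 h2 ih
  exact hne (PDFA.langFrom_congr hcong (hchain (Fin.last t)))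
end

section
/- Let N be a reversible partial DFA recognizing L, U the finite set of words u such that u = ε or δ(q₀,u) is defined and not an ∞-state of the minimal automaton, and define N′ on state set Q × U with initial state (q₀, ε), final states F × U, and transition (q,u)·a = (qa, ua) if (q·a)* is not an ∞-state, and (qa, u) otherwise. Then N′ is reversible, L(N′) = L, each state (q,u) is equivalent to q, and for every ⊕-state p of the minimal automaton reachable by words u₁,…,u_n (n ≥ 2), the states (q_{u_i}, u_i) are n pairwise distinct reachable states of N′ equivalent to p. -/
open scoped Classical
section Aux14

variable {Q Qm A : Type}

theorem aux_run_append (M : PDFA Q A) (q : Q) (v w : List A) :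
    M.run q (v ++ w) = (M.run q v).bind fun r => M.run r w := by
  induction v generalizing q with
  | nil => simp [PDFA.run]
  | cons a v ih =>
    simp only [List.cons_append, PDFA.run]
    cases M.step q a with
    | none => rfl
    | some q' => simp [ih]

theorem aux_inf_run {M : PDFA Q A} {r r' : Q} {w : List A}
    (h : M.InfState r) (hw : M.run r w = some r') : M.InfState r' := by
  have hsub : (fun v => v ++ w) '' M.AccessWords r ⊆ M.AccessWords r' := by
    rintro _ ⟨v, hv, rfl⟩
    simp only [PDFA.AccessWords, Set.mem_setOf_eq] at hv ⊢
    rw [aux_run_append, hv]; exact hw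
  refine Set.Infinite.mono hsub (Set.Infinite.image ?_ h)
  exact fun a _ b _ hab => List.append_cancel_right hab

theorem aux_frun {N : PDFA Q A} {M : PDFA Qm A} {f : Q → Qm}
    (hfhom : ∀ (q : Q) (a : A) (q' : Q),
      N.step q a = some q' → M.step (f q) a = some (f q')) :
    ∀ (w : List A) (q q' : Q), N.run q w = some q' → M.run (f q) w = some (f q') := by
  intro w
  induction w with
  | nil => intro q q' h; simp [PDFA.run] at h ⊢; rw [h]
  | cons a w ih =>
    intro q q' h
    simp only [PDFA.run] at h ⊢
    cases hs : N.step q a with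
    | none => rw [hs] at h; simp at h
    | some q₁ =>
      rw [hs] at h; simp only [Option.bind_some] at h
      rw [hfhom q a q₁ hs]
      simpa using ih q₁ q' h

end Aux14

section Aux14b
variable {Q Qm A : Type}

theorem aux_run_fst (N : PDFA Q A) (M : PDFA Qm A) (f : Q → Qm)
    (N' : PDFA (Q × List A) A)
    (hstep' : ∀ (q : Q) (u : List A) (a : A), N'.step (q, u) a =
      (N.step q a).map fun q' =>
        if M.InfState (f q') then (q', u) else (q', u ++ [a])) :
    ∀ (w : List A) (q : Q) (u : List A),
      (N'.run (q, u) w).map Prod.fst = N.run q w := by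
  intro w
  induction w with
  | nil => intro q u; simp [PDFA.run]
  | cons a w ih =>
    intro q u
    simp only [PDFA.run, hstep']
    cases hs : N.step q a with
    | none => simp
    | some q₁ =>
      simp only [Option.map_some, Option.bind_some]
      by_cases hI : M.InfState (f q₁)
      · simp only [hI, if_pos]; exact ih q₁ u
      · simp only [hI, if_neg, if_false]; exact ih q₁ (u ++ [a])

theorem aux_run_track (N : PDFA Q A) (M : PDFA Qm A) (f : Q → Qm)
    (hfhom : ∀ (q : Q) (a : A) (q' : Q),
      N.step q a = some q' → M.step (f q) a = some (f q'))
    (N' : PDFA (Q × List A) A)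
    (hstep' : ∀ (q : Q) (u : List A) (a : A), N'.step (q, u) a =
      (N.step q a).map fun q' =>
        if M.InfState (f q') then (q', u) else (q', u ++ [a])) :
    ∀ (w : List A) (q : Q) (u : List A) (q' : Q), N.run q w = some q' →
      ¬ M.InfState (f q') → N'.run (q, u) w = some (q', u ++ w) := by
  intro w
  induction w with
  | nil => intro q u q' h _; simp [PDFA.run] at h ⊢; simp [h]
  | cons a w ih =>
    intro q u q' h hI
    simp only [PDFA.run] at h
    cases hs : N.step q a with
    | none => rw [hs] at h; simp at h
    | some q₁ =>
      rw [hs] at h; simp only [Option.bind_some] at h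
      have hI1 : ¬ M.InfState (f q₁) := fun hinf =>
        hI (aux_inf_run hinf (aux_frun hfhom w q₁ q' h))
      simp only [PDFA.run, hstep', hs, Option.map_some, hI1, if_neg, if_false,
        Option.bind_some]
      have := ih q₁ (u ++ [a]) q' h hI
      simpa [List.append_assoc] using this

end Aux14b

/-- The word-tracking construction `N'` on `Q × Σ*` (restricted to the
finite set `U` of access words of non-`∞`-states, plus `ε`) is reversible, recognizes
the same language, has each state `(q,u)` equivalent to `q`, and provides, for each
`⊕`-state `p` of the minimal automaton, pairwise distinct reachable states equivalent
to `p`, one for each access word of `p`. -/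
theorem stmt14 {Q Qm A : Type} [Fintype Qm] (N : PDFA Q A) (M : PDFA Qm A)
    (hMtrim : M.Trim)
    (hMmin : ∀ p q : Qm, M.LangFrom p = M.LangFrom q → p = q)
    (hNrev : N.Reversible) (hlang : N.Lang = M.Lang)
    (f : Q → Qm)
    (hf : ∀ q : Q, M.LangFrom (f q) = N.LangFrom q)
    (hfhom : ∀ (q : Q) (a : A) (q' : Q),
      N.step q a = some q' → M.step (f q) a = some (f q'))
    (hfinit : f N.init = M.init)
    (N' : PDFA (Q × List A) A)
    (hinit' : N'.init = (N.init, []))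
    (hacc' : ∀ (q : Q) (u : List A), N'.acc (q, u) ↔ N.acc q)
    (hstep' : ∀ (q : Q) (u : List A) (a : A), N'.step (q, u) a =
      (N.step q a).map fun q' =>
        if M.InfState (f q') then (q', u) else (q', u ++ [a])) :
    ({u : List A | u = [] ∨ ∃ p : Qm, M.run M.init u = some p ∧ ¬ M.InfState p}.Finite) ∧
    N'.Reversible ∧ N'.Lang = N.Lang ∧
    (∀ (q : Q) (u : List A), N'.LangFrom (q, u) = N.LangFrom q) ∧
    (∀ p : Qm, M.PlusState p →
      ∀ u₁ u₂ : List A, u₁ ≠ u₂ →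
        M.run M.init u₁ = some p → M.run M.init u₂ = some p →
        ∃ s₁ s₂ : Q × List A, s₁ ≠ s₂ ∧
          N'.run N'.init u₁ = some s₁ ∧ N'.run N'.init u₂ = some s₂ ∧
          N'.LangFrom s₁ = M.LangFrom p ∧ N'.LangFrom s₂ = M.LangFrom p) := by
  have hEquiv : ∀ (q : Q) (u : List A), N'.LangFrom (q, u) = N.LangFrom q := by
    intro q u
    ext w
    constructor
    · rintro ⟨⟨q', u'⟩, hrun, hacc⟩
      have h := aux_run_fst N M f N' hstep' w q u
      rw [hrun] at h
      exact ⟨q', h.symm, (hacc' q' u').mp hacc⟩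
    · rintro ⟨q', hrun, hacc⟩
      have h := aux_run_fst N M f N' hstep' w q u
      rw [hrun] at h
      cases h' : N'.run (q, u) w with
      | none => rw [h'] at h; simp at h
      | some s =>
        rw [h'] at h
        simp only [Option.map_some, Option.some.injEq] at h
        refine ⟨s, h', ?_⟩
        obtain ⟨s1, s2⟩ := s
        cases h
        exact (hacc' _ s2).mpr hacc
  refine ⟨?_, ?_, ?_, hEquiv, ?_⟩
  · -- finiteness
    have hsub : {u : List A | u = [] ∨ ∃ p : Qm, M.run M.init u = some p ∧ ¬ M.InfState p} ⊆
        insert [] (⋃ p : Qm, {u | M.run M.init u = some p ∧ ¬ M.InfState p}) := by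
      rintro u (rfl | ⟨p, h1, h2⟩)
      · exact Set.mem_insert _ _
      · exact Set.mem_insert_of_mem _ (Set.mem_iUnion.2 ⟨p, h1, h2⟩)
    refine Set.Finite.subset (Set.Finite.insert _ (Set.finite_iUnion fun p => ?_)) hsub
    by_cases hp : M.InfState p
    · have he : {u : List A | M.run M.init u = some p ∧ ¬ M.InfState p} = ∅ := by
        ext u; simp [hp]
      simp [he]
    · exact Set.Finite.subset (Set.not_infinite.mp hp) (fun u hu => hu.1)
  · -- reversibility
    rintro ⟨p1, p2⟩ ⟨q1, q2⟩ a r h1 h2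
    rw [hstep'] at h1 h2
    obtain ⟨r1, hr1, hre1⟩ := Option.map_eq_some_iff.mp h1
    obtain ⟨r2, hr2, hre2⟩ := Option.map_eq_some_iff.mp h2
    have hfst : r1 = r2 := by
      have e1 : r.1 = r1 := by rw [← hre1]; split <;> rfl
      have e2 : r.1 = r2 := by rw [← hre2]; split <;> rfl
      rw [← e1, e2]
    subst hfst
    have hq : p1 = q1 := hNrev p1 q1 a r1 hr1 hr2
    subst hq
    by_cases hI : M.InfState (f r1)
    · rw [if_pos hI] at hre1 hre2
      rw [← hre2] at hre1
      cases hre1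
      rfl
    · rw [if_neg hI] at hre1 hre2
      rw [← hre2] at hre1
      have := (Prod.mk.injEq _ _ _ _).mp hre1
      have h2' := List.append_cancel_right this.2
      rw [h2']
  · -- language
    unfold PDFA.Lang
    rw [hinit']
    exact hEquiv N.init []
  · -- plus states
    intro p hp u₁ u₂ hne h1 h2
    obtain ⟨w, qf, hwrun, hwacc⟩ := (hMtrim p).2
    have key : ∀ u : List A, M.run M.init u = some p →
        ∃ q : Q, N.run N.init u = some q ∧ f q = p := by
      intro u hu
      have hmem : u ++ w ∈ M.Lang := by
        refine ⟨qf, ?_, hwacc⟩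
        rw [aux_run_append, hu]
        exact hwrun
      rw [← hlang] at hmem
      obtain ⟨q'', hq'', _⟩ := hmem
      rw [aux_run_append] at hq''
      cases hq : N.run N.init u with
      | none => rw [hq] at hq''; simp at hq''
      | some q =>
        refine ⟨q, rfl, ?_⟩
        have hh := aux_frun hfhom u N.init q hq
        rw [hfinit, hu] at hh
        exact (Option.some_injective _ hh).symm
    obtain ⟨q₁, hq₁, hfq₁⟩ := key u₁ h1
    obtain ⟨q₂, hq₂, hfq₂⟩ := key u₂ h2
    have hnI : ¬ M.InfState p := hp.2
    have ht₁ : N'.run N'.init u₁ = some (q₁, u₁) := by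
      rw [hinit']
      simpa using aux_run_track N M f hfhom N' hstep' u₁ N.init [] q₁ hq₁ (hfq₁ ▸ hnI)
    have ht₂ : N'.run N'.init u₂ = some (q₂, u₂) := by
      rw [hinit']
      simpa using aux_run_track N M f hfhom N' hstep' u₂ N.init [] q₂ hq₂ (hfq₂ ▸ hnI)
    refine ⟨(q₁, u₁), (q₂, u₂), ?_, ht₁, ht₂, ?_, ?_⟩
    · intro h; exact hne (congrArg Prod.snd h)
    · rw [hEquiv, ← hf, hfq₁]
    · rw [hEquiv, ← hf, hfq₂]
end

section
/- Let N be a trim reversible partial DFA and q a state lying in a nontrivial SCC, with av a shortest nonempty word such that q·(av) = q (a a letter). For any k ≥ 1, define N″ on Q × {0,…,k−1} with (q′,i)·b = (q′b, (i+1) mod k) if q′ = q and b = a, and (q′b, i) otherwise. Then N″ is reversible, each state (q′,i) is equivalent to q′, and the states (q,0),…,(q,k−1) satisfy (q,i)·(av) = (q, (i+1) mod k). -/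
open scoped Classical

section Aux
variable {Q A : Type} {k : ℕ} {N : PDFA Q A} {N'' : PDFA (Q × ZMod k) A} {q : Q} {a : A}

theorem aux_proj
    (hstep : ∀ (p : Q) (i : ZMod k) (b : A), N''.step (p, i) b =
      (N.step p b).map fun p' => if p = q ∧ b = a then (p', i + 1) else (p', i)) :
    ∀ (w : List A) (p : Q) (i : ZMod k) (r : Q × ZMod k),
      N''.run (p, i) w = some r → N.run p w = some r.1 := by
  intro w
  induction w with
  | nil =>
    intro p i r h
    simp [PDFA.run] at h ⊢
    simp [← h]
  | cons b w ih =>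
    intro p i r h
    rw [PDFA.run, hstep] at h
    rw [PDFA.run]
    cases hs : N.step p b with
    | none => rw [hs] at h; simp at h
    | some p'' =>
      rw [hs] at h
      simp only [Option.map_some, Option.bind_some] at h ⊢
      split at h <;> exact ih _ _ _ h

theorem aux_lift
    (hstep : ∀ (p : Q) (i : ZMod k) (b : A), N''.step (p, i) b =
      (N.step p b).map fun p' => if p = q ∧ b = a then (p', i + 1) else (p', i)) :
    ∀ (w : List A) (p : Q) (i : ZMod k) (p' : Q),
      N.run p w = some p' → ∃ j, N''.run (p, i) w = some (p', j) := by
  intro w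
  induction w with
  | nil =>
    intro p i p' h
    simp [PDFA.run] at h ⊢
    exact h
  | cons b w ih =>
    intro p i p' h
    rw [PDFA.run] at h
    rw [PDFA.run, hstep]
    cases hs : N.step p b with
    | none => rw [hs] at h; simp at h
    | some p'' =>
      rw [hs] at h
      simp only [Option.bind_some] at h
      simp only [Option.map_some, Option.bind_some]
      split
      · exact ih _ _ _ h
      · exact ih _ _ _ h

theorem aux_noinc
    (hstep : ∀ (p : Q) (i : ZMod k) (b : A), N''.step (p, i) b =
      (N.step p b).map fun p' => if p = q ∧ b = a then (p', i + 1) else (p', i)) :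
    ∀ (w : List A) (p : Q) (i : ZMod k) (p' : Q),
      N.run p w = some p' →
      (∀ w₁ w₂, w = w₁ ++ a :: w₂ → N.run p w₁ ≠ some q) →
      N''.run (p, i) w = some (p', i) := by
  intro w
  induction w with
  | nil =>
    intro p i p' h _
    simp [PDFA.run] at h ⊢
    exact h
  | cons b w ih =>
    intro p i p' h hno
    rw [PDFA.run] at h
    rw [PDFA.run, hstep]
    cases hs : N.step p b with
    | none => rw [hs] at h; simp at h
    | some p'' =>
      rw [hs] at h
      simp only [Option.bind_some] at h
      simp only [Option.map_some, Option.bind_some]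
      have hcond : ¬ (p = q ∧ b = a) := by
        rintro ⟨rfl, rfl⟩
        exact hno [] w rfl (by simp [PDFA.run])
      rw [if_neg hcond]
      refine ih _ _ _ h ?_
      intro w₁ w₂ hw hrun
      refine hno (b :: w₁) w₂ (by rw [hw]; rfl) ?_
      rw [PDFA.run, hs, Option.bind_some]
      exact hrun

end Aux

/-- The cycle blow-up construction. If `q` lies in a nontrivial SCC of a
trim reversible partial DFA `N` and `a::v` is a shortest nonempty word with
`q·(av) = q`, then the automaton `N''` on `Q × ZMod k` that increments the counter
exactly on the transition `(q, a)` is reversible, state `(q',i)` is equivalent to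
`q'`, and `(q,i)·(av) = (q, i+1)`. -/
theorem stmt15 {Q A : Type} (N : PDFA Q A) (hNtrim : N.Trim) (hNrev : N.Reversible)
    (q : Q) (a : A) (v : List A)
    (hloop : N.run q (a :: v) = some q)
    (hshort : ∀ u : List A, u ≠ [] → N.run q u = some q →
      (a :: v).length ≤ u.length)
    (k : ℕ) (hk : 1 ≤ k)
    (N'' : PDFA (Q × ZMod k) A)
    (hinit : N''.init = (N.init, 0))
    (hacc : ∀ (p : Q) (i : ZMod k), N''.acc (p, i) ↔ N.acc p)
    (hstep : ∀ (p : Q) (i : ZMod k) (b : A), N''.step (p, i) b =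
      (N.step p b).map fun p' => if p = q ∧ b = a then (p', i + 1) else (p', i)) :
    N''.Reversible ∧
    (∀ (p : Q) (i : ZMod k), N''.LangFrom (p, i) = N.LangFrom p) ∧
    (∀ i : ZMod k, N''.run (q, i) (a :: v) = some (q, i + 1)) := by
  refine ⟨?_, ?_, ?_⟩
  · rintro ⟨p₁, i₁⟩ ⟨p₂, i₂⟩ b ⟨r, j⟩ h₁ h₂
    rw [hstep] at h₁ h₂
    cases hs₁ : N.step p₁ b with
    | none => rw [hs₁] at h₁; simp at h₁
    | some r₁ =>
      cases hs₂ : N.step p₂ b with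
      | none => rw [hs₂] at h₂; simp at h₂
      | some r₂ =>
        rw [hs₁] at h₁; rw [hs₂] at h₂
        simp only [Option.map_some, ← apply_ite (Prod.mk r₁), Option.some_inj,
          Prod.mk.injEq] at h₁
        simp only [Option.map_some, ← apply_ite (Prod.mk r₂), Option.some_inj,
          Prod.mk.injEq] at h₂
        obtain ⟨rfl, hj₁⟩ := h₁
        obtain ⟨rfl, hj₂⟩ := h₂
        have hp : p₁ = p₂ := hNrev _ _ b _ hs₁ hs₂
        subst hp
        refine Prod.ext rfl ?_
        by_cases hc : p₁ = q ∧ b = a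
        · rw [if_pos hc] at hj₁ hj₂
          exact add_right_cancel (hj₁.trans hj₂.symm)
        · rw [if_neg hc] at hj₁ hj₂
          exact hj₁.trans hj₂.symm
  · intro p i
    ext w
    constructor
    · rintro ⟨⟨p', j⟩, hrun, haccp⟩
      exact ⟨p', aux_proj hstep w p i _ hrun, (hacc p' j).mp haccp⟩
    · rintro ⟨p', hrun, haccp⟩
      obtain ⟨j, hj⟩ := aux_lift hstep w p i p' hrun
      exact ⟨(p', j), hj, (hacc p' j).mpr haccp⟩
  · intro i
    rw [PDFA.run] at hloop ⊢
    rw [hstep]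
    cases hs : N.step q a with
    | none => rw [hs] at hloop; simp at hloop
    | some p'' =>
      rw [hs] at hloop
      simp only [Option.bind_some] at hloop
      simp only [Option.map_some, Option.bind_some, if_pos (And.intro rfl rfl)]
      refine aux_noinc hstep v p'' (i+1) q hloop ?_
      intro w₁ w₂ hw hrun
      have hloop2 : N.run q (a :: w₁) = some q := by
        rw [PDFA.run, hs, Option.bind_some]; exact hrun
      have := hshort (a :: w₁) (by simp) hloop2
      simp only [List.length_cons, hw, List.length_append] at this
      omega
end
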